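/- Let C(τ) = Σ_{s=1}^{3} [1 + Ψ_s(1 − e^{−λ_s τ})](τ/2 + T_s) + μE/τ with Ψ_s, T_s ≥ 0, λ_s > 0, μ > 0, E > 0. If τ > 0 satisfies 1 − λ_s τ/2 − λ_s T_s ≥ 0 for all s ∈ {1,2,3}, then C''(τ) > 0. -/

import Mathlib

open Real

lemma stmt6_exp_deriv (a t : ℝ) :
    HasDerivAt (fun t : ℝ => Real.exp (-(a * t))) (Real.exp (-(a * t)) * (-a)) t := by
  have h : HasDerivAt (fun t : ℝ => -(a * t)) (-a) t := by
    simpa using ((hasDerivAt_id t).const_mul a).fun_neg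
  exact h.exp

/-- For C(τ) = Σ_{s=1}^{3} [1 + Ψ_s(1 − e^{−λ_s τ})](τ/2 + T_s) + μE/τ,
if τ > 0 satisfies 1 − λ_s τ/2 − λ_s T_s ≥ 0 for all s, then C''(τ) > 0. -/
theorem stmt6 (Ψ T lam : Fin 3 → ℝ) (μ E : ℝ)
    (hΨ : ∀ s, 0 ≤ Ψ s) (hT : ∀ s, 0 ≤ T s) (hlam : ∀ s, 0 < lam s)
    (hμ : 0 < μ) (hE : 0 < E) (τ : ℝ) (hτ : 0 < τ)
    (hconv : ∀ s, 0 ≤ 1 - lam s * τ / 2 - lam s * T s) :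
    0 < deriv (deriv (fun t : ℝ =>
        (∑ s, (1 + Ψ s * (1 - Real.exp (-(lam s * t)))) * (t / 2 + T s)) + μ * E / t)) τ := by
  set f : ℝ → ℝ := fun t : ℝ =>
      (∑ s, (1 + Ψ s * (1 - Real.exp (-(lam s * t)))) * (t / 2 + T s)) + μ * E / t with hfdef
  set g : ℝ → ℝ := fun t : ℝ =>
      (∑ s, (Ψ s * (lam s * Real.exp (-(lam s * t))) * (t / 2 + T s)
        + (1 + Ψ s * (1 - Real.exp (-(lam s * t)))) / 2)) - μ * E / t ^ 2 with hgdef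
  have hfg : ∀ t : ℝ, t ≠ 0 → HasDerivAt f (g t) t := by
    intro t ht
    have hsum : HasDerivAt
        (fun t : ℝ => ∑ s, (1 + Ψ s * (1 - Real.exp (-(lam s * t)))) * (t / 2 + T s))
        (∑ s : Fin 3, ((Ψ s * (0 - Real.exp (-(lam s * t)) * (-(lam s)))) * (t / 2 + T s)
          + (1 + Ψ s * (1 - Real.exp (-(lam s * t)))) * (1 / 2 + 0))) t := by
      apply HasDerivAt.fun_sum
      intro s _
      have hu : HasDerivAt (fun t : ℝ => 1 + Ψ s * (1 - Real.exp (-(lam s * t))))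
          (Ψ s * (0 - Real.exp (-(lam s * t)) * (-(lam s)))) t :=
        (((hasDerivAt_const t (1:ℝ)).sub (stmt6_exp_deriv (lam s) t)).const_mul (Ψ s)).const_add 1
      have hv : HasDerivAt (fun t : ℝ => t / 2 + T s) (1 / 2 + 0) t :=
        ((hasDerivAt_id t).div_const 2).add (hasDerivAt_const t (T s))
      simpa using hu.fun_mul hv
    have hq : HasDerivAt (fun t : ℝ => μ * E / t)
        ((0 * t - μ * E * 1) / t ^ 2) t :=
      (hasDerivAt_const t (μ * E)).div (hasDerivAt_id t) ht
    have := hsum.fun_add hq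
    refine this.congr_deriv ?_
    simp only [hgdef, Fin.sum_univ_three]
    field_simp
    ring
  have hpos : ∀ᶠ t in nhds τ, (0:ℝ) < t := by
    exact eventually_gt_nhds hτ
  have hev : deriv f =ᶠ[nhds τ] g := by
    filter_upwards [hpos] with t ht
    exact (hfg t (ne_of_gt ht)).deriv
  have h2 : deriv (deriv f) τ = deriv g τ := hev.deriv_eq
  have hg2 : HasDerivAt g
      ((∑ s : Fin 3, Ψ s * lam s * Real.exp (-(lam s * τ)) * (1 - lam s * τ / 2 - lam s * T s))
        + 2 * μ * E / τ ^ 3) τ := by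
    have hsum : HasDerivAt
        (fun t : ℝ => ∑ s, (Ψ s * (lam s * Real.exp (-(lam s * t))) * (t / 2 + T s)
          + (1 + Ψ s * (1 - Real.exp (-(lam s * t)))) / 2))
        (∑ s : Fin 3, ((Ψ s * (lam s * (Real.exp (-(lam s * τ)) * (-(lam s))))) * (τ / 2 + T s)
          + Ψ s * (lam s * Real.exp (-(lam s * τ))) * (1 / 2 + 0)
          + (Ψ s * (0 - Real.exp (-(lam s * τ)) * (-(lam s)))) / 2)) τ := by
      apply HasDerivAt.fun_sum
      intro s _
      have he := stmt6_exp_deriv (lam s) τ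
      have hu : HasDerivAt (fun t : ℝ => Ψ s * (lam s * Real.exp (-(lam s * t))))
          (Ψ s * (lam s * (Real.exp (-(lam s * τ)) * (-(lam s))))) τ :=
        (he.const_mul (lam s)).const_mul (Ψ s)
      have hv : HasDerivAt (fun t : ℝ => t / 2 + T s) (1 / 2 + 0) τ :=
        ((hasDerivAt_id τ).div_const 2).add (hasDerivAt_const τ (T s))
      have hw : HasDerivAt (fun t : ℝ => (1 + Ψ s * (1 - Real.exp (-(lam s * t)))) / 2)
          ((Ψ s * (0 - Real.exp (-(lam s * τ)) * (-(lam s)))) / 2) τ :=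
        ((((hasDerivAt_const τ (1:ℝ)).sub he).const_mul (Ψ s)).const_add 1).div_const 2
      exact (hu.mul hv).add hw
    have hq : HasDerivAt (fun t : ℝ => μ * E / t ^ 2)
        ((0 * τ ^ 2 - μ * E * (2 * τ ^ (2 - 1))) / (τ ^ 2) ^ 2) τ :=
      (hasDerivAt_const τ (μ * E)).div (hasDerivAt_pow 2 τ) (by positivity)
    have := hsum.fun_sub hq
    refine this.congr_deriv ?_
    rw [Fin.sum_univ_three, Fin.sum_univ_three]
    field_simp
    ring
  rw [h2, hg2.deriv]
  have h1 : (0:ℝ) ≤ ∑ s : Fin 3, Ψ s * lam s * Real.exp (-(lam s * τ))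
      * (1 - lam s * τ / 2 - lam s * T s) := by
    apply Finset.sum_nonneg
    intro s _
    have := hconv s
    have := hΨ s
    have := (hlam s).le
    positivity
  have h3 : (0:ℝ) < 2 * μ * E / τ ^ 3 := by positivity
  linarith
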